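/- A group G is bi-orderable if and only if for every finite subset {x_1, ..., x_n} of G not containing the identity, there exist signs ε_i ∈ {±1} such that the normal subsemigroup of G generated by x_1^{ε_1}, ..., x_n^{ε_n} does not contain the identity. -/

import Mathlib

/-- A group is bi-orderable if it admits a strict total order invariant under
both left and right multiplication. -/
def BiOrderable (G : Type*) [Group G] : Prop :=
  ∃ r : G → G → Prop, IsStrictTotalOrder G r ∧
    (∀ f g h : G, r g h → r (f * g) (f * h)) ∧
    (∀ f g h : G, r g h → r (g * f) (h * f))

private lemma exists_finset_of_mem_closure_aux {M : Type*} [Semigroup M] {S : Set M} {a : M}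
    (h : a ∈ Subsemigroup.closure S) :
    ∃ F : Finset M, ↑F ⊆ S ∧ a ∈ Subsemigroup.closure (F : Set M) := by
  classical
  induction h using Subsemigroup.closure_induction with
  | mem x hx => exact ⟨{x}, by simpa using hx, Subsemigroup.subset_closure (by simp)⟩
  | mul x y hx hy ihx ihy =>
    obtain ⟨F, hF, haF⟩ := ihx
    obtain ⟨F', hF', haF'⟩ := ihy
    refine ⟨F ∪ F', ?_, mul_mem (Subsemigroup.closure_mono (by simp) haF)
      (Subsemigroup.closure_mono (by simp) haF')⟩
    push_cast
    exact Set.union_subset hF hF'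

/-- `G` is bi-orderable iff for every finite subset not containing the identity one can
choose signs so that the normal subsemigroup generated by the signed elements
avoids the identity. -/
theorem biOrderable_iff_signs {G : Type*} [Group G] :
    BiOrderable G ↔
      ∀ s : Finset G, (1 : G) ∉ s →
        ∃ ε : G → ℤˣ, (1 : G) ∉ Subsemigroup.closure
          {h : G | ∃ g : G, ∃ x ∈ s, h = g * x ^ ((ε x : ℤ)) * g⁻¹} := by
  classical
  constructor
  · rintro ⟨r, hto, hl, hr⟩ s hs
    haveI := hto
    refine ⟨fun x => if r 1 x then 1 else -1, ?_⟩
    set Q : Subsemigroup G :=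
      { carrier := {g | r 1 g}
        mul_mem' := by
          intro a b ha hb
          have h1 : r b (a * b) := by simpa using hr b 1 a ha
          exact _root_.trans hb h1 } with hQ
    have hconj : ∀ g y : G, r 1 y → r 1 (g * y * g⁻¹) := by
      intro g y hy
      have h1 : r (g * 1) (g * y) := hl g 1 y hy
      have h2 : r (g * 1 * g⁻¹) (g * y * g⁻¹) := hr g⁻¹ _ _ h1
      simpa using h2
    have hsub : {h : G | ∃ g : G, ∃ x ∈ s,
        h = g * x ^ (((fun x => if r 1 x then 1 else -1 : G → ℤˣ) x : ℤ)) * g⁻¹} ⊆ Q := by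
      rintro h ⟨g, x, hx, rfl⟩
      have hx1 : x ≠ 1 := fun e => hs (e ▸ hx)
      by_cases hrx : r 1 x
      · simp only [if_pos hrx]
        exact hconj g _ (by simpa using hrx)
      · simp only [if_neg hrx]
        have : r x 1 := by
          rcases trichotomous_of r x 1 with h' | h' | h'
          · exact h'
          · exact absurd h' hx1
          · exact absurd h' hrx
        have hinv : r 1 x⁻¹ := by simpa using hl x⁻¹ x 1 this
        exact hconj g _ (by simpa using hinv)
    intro hmem
    have : (1 : G) ∈ Q := Subsemigroup.closure_le.mpr hsub hmem
    exact irrefl_of r 1 this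
  · intro H
    letI : TopologicalSpace ℤˣ := ⊥
    haveI : DiscreteTopology ℤˣ := ⟨rfl⟩
    haveI : Nonempty {s : Finset G // (1 : G) ∉ s} := ⟨⟨∅, by simp⟩⟩
    set C : {s : Finset G // (1 : G) ∉ s} → Set (G → ℤˣ) := fun s =>
      {ε | (1 : G) ∉ Subsemigroup.closure
        {h : G | ∃ g : G, ∃ x ∈ s.1, h = g * x ^ ((ε x : ℤ)) * g⁻¹}} with hC
    have hdir : Directed (· ⊇ ·) C := by
      rintro ⟨s, hs⟩ ⟨t, ht⟩
      refine ⟨⟨s ∪ t, by simp [hs, ht]⟩, ?_, ?_⟩ <;>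
      · intro ε hε hmem
        refine hε (Subsemigroup.closure_mono ?_ hmem)
        rintro h ⟨g, x, hx, e⟩
        exact ⟨g, x, by simp [Finset.mem_union, hx], e⟩
    have hne : ∀ i, (C i).Nonempty := fun i => H i.1 i.2
    have hclosed : ∀ i, IsClosed (C i) := by
      rintro ⟨s, hs⟩
      have : C ⟨s, hs⟩ = (fun ε : G → ℤˣ => fun x : s => ε x) ⁻¹'
          {σ : s → ℤˣ | (1 : G) ∉ Subsemigroup.closure
            {h : G | ∃ g : G, ∃ x : s, h = g * (x : G) ^ ((σ x : ℤ)) * g⁻¹}} := by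
        ext ε
        simp only [hC, Set.mem_setOf_eq, Set.mem_preimage]
        constructor <;> intro h1 h2 <;> refine h1 (Subsemigroup.closure_mono ?_ h2)
        · rintro h ⟨g, x, e⟩; exact ⟨g, x.1, x.2, e⟩
        · rintro h ⟨g, x, hx, e⟩; exact ⟨g, ⟨x, hx⟩, e⟩
      rw [this]
      exact (isClosed_discrete _).preimage (continuous_pi fun i => continuous_apply _)
    obtain ⟨ε, hε⟩ := IsCompact.nonempty_iInter_of_directed_nonempty_isCompact_isClosed
      C hdir hne (fun i => (hclosed i).isCompact) hclosed
    simp only [Set.mem_iInter] at hε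
    set P : Subsemigroup G := Subsemigroup.closure
      {h : G | ∃ g x : G, x ≠ 1 ∧ h = g * x ^ ((ε x : ℤ)) * g⁻¹} with hP
    have hone : (1 : G) ∉ P := by
      intro h1
      obtain ⟨F, hF, h1F⟩ := exists_finset_of_mem_closure_aux h1
      have hw : ∀ f ∈ F, ∃ x : G, x ≠ 1 ∧ ∃ g : G, f = g * x ^ ((ε x : ℤ)) * g⁻¹ := by
        intro f hf
        obtain ⟨g, x, hx, e⟩ := hF hf
        exact ⟨x, hx, g, e⟩
      choose xf hxf1 gf hgf using hw
      set s : Finset G := F.attach.image (fun f => xf f.1 f.2) with hs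
      have hs1 : (1 : G) ∉ s := by
        simp only [hs, Finset.mem_image, Finset.mem_attach, true_and, Subtype.exists]
        rintro ⟨f, hf, e⟩
        exact hxf1 f hf e
      have := hε ⟨s, hs1⟩
      refine this (Subsemigroup.closure_mono ?_ h1F)
      intro f hf
      exact ⟨gf f hf, xf f hf,
        by simp only [hs, Finset.mem_image]; exact ⟨⟨f, hf⟩, Finset.mem_attach _ _, rfl⟩,
        hgf f hf⟩
    have hconj : ∀ a ∈ P, ∀ g : G, g * a * g⁻¹ ∈ P := by
      intro a ha
      induction ha using Subsemigroup.closure_induction with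
      | mem x hx =>
        intro g
        obtain ⟨g', y, hy, rfl⟩ := hx
        refine Subsemigroup.subset_closure ⟨g * g', y, hy, ?_⟩
        group
      | mul x y hx hy ihx ihy =>
        intro g
        have : g * (x * y) * g⁻¹ = (g * x * g⁻¹) * (g * y * g⁻¹) := by group
        rw [this]
        exact mul_mem (ihx g) (ihy g)
    have hpos : ∀ x : G, x ≠ 1 → x ∈ P ∨ x⁻¹ ∈ P := by
      intro x hx
      have hgen : x ^ ((ε x : ℤ)) ∈ P :=
        Subsemigroup.subset_closure ⟨1, x, hx, by group⟩
      rcases Int.units_eq_one_or (ε x) with h | h <;> rw [h] at hgen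
      · left; simpa using hgen
      · right; simpa using hgen
    refine ⟨fun a b => a⁻¹ * b ∈ P,
      { trichotomous := ?_, irrefl := ?_, trans := ?_ }, ?_, ?_⟩
    · intro a b
      suffices hor : a⁻¹ * b ∈ P ∨ a = b ∨ b⁻¹ * a ∈ P from fun h1 h2 => (hor.resolve_left h1).resolve_right h2
      by_cases hab : a⁻¹ * b = 1
      · exact Or.inr (Or.inl (by rwa [inv_mul_eq_one] at hab))
      · rcases hpos _ hab with h | h
        · exact Or.inl h
        · refine Or.inr (Or.inr ?_)
          have : (a⁻¹ * b)⁻¹ = b⁻¹ * a := by group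
          rwa [this] at h
    · intro a hab
      rw [inv_mul_cancel] at hab
      exact hone hab
    · intro a b c hab hbc
      have : a⁻¹ * c = (a⁻¹ * b) * (b⁻¹ * c) := by group
      rw [this]
      exact mul_mem hab hbc
    · intro f g h hgh
      have : (f * g)⁻¹ * (f * h) = g⁻¹ * h := by group
      rw [this]; exact hgh
    · intro f g h hgh
      have : (g * f)⁻¹ * (h * f) = f⁻¹ * (g⁻¹ * h) * f⁻¹⁻¹ := by group
      rw [this]
      exact hconj _ hgh f⁻¹
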